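/- For m ≥ 3, the principal congruence subgroup of SL(n, ℤ) of level m (the kernel of reduction mod m) is torsion free. -/
import Mathlib


open Finset in
private lemma entry_dvd_pow {n : ℕ} (d : ℤ) (N : Matrix (Fin n) (Fin n) ℤ)
    (hN : ∀ i j, d ∣ N i j) : ∀ t i j, d ^ (t + 1) ∣ (N ^ (t + 1)) i j := by
  intro t
  induction t with
  | zero => simpa using hN
  | succ t ih =>
    intro i j
    rw [pow_succ d (t + 1), pow_succ N (t + 1), Matrix.mul_apply]
    exact Finset.dvd_sum fun l _ => mul_dvd_mul (ih i l) (hN l j)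

open Finset in
private lemma minkowski_step {n : ℕ} (p q : ℕ) (hp : p.Prime) (hq : q.Prime) (k : ℕ)
    (hk : 1 ≤ k) (hcase : p = q → q = 2 → 2 ≤ k)
    (N : Matrix (Fin n) (Fin n) ℤ) (hN : (N + 1) ^ p = 1)
    (hd : ∀ i j, (q : ℤ) ^ k ∣ N i j) : ∀ i j, (q : ℤ) ^ (k + 1) ∣ N i j := by
  have hp2 : 2 ≤ p := hp.two_le
  have expand := (Commute.one_right N).add_pow p
  rw [hN] at expand
  -- split the sum
  have hsplit : ∑ m ∈ range (p + 1), N ^ m * 1 ^ (p - m) * (p.choose m : Matrix (Fin n) (Fin n) ℤ)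
      = (1 + N * p) + ∑ m ∈ Ico 2 (p + 1), N ^ m * (p.choose m : Matrix (Fin n) (Fin n) ℤ) := by
    rw [range_eq_Ico, ← Finset.sum_Ico_consecutive _ (by omega : 0 ≤ 2) (by omega : 2 ≤ p + 1)]
    congr 1
    · rw [← range_eq_Ico]
      simp [Finset.sum_range_succ, Nat.choose_one_right]
    · exact Finset.sum_congr rfl fun m hm => by rw [one_pow, mul_one]
  rw [hsplit] at expand
  have key : N * (p : Matrix (Fin n) (Fin n) ℤ)
      = - ∑ m ∈ Ico 2 (p + 1), N ^ m * (p.choose m : Matrix (Fin n) (Fin n) ℤ) := by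
    have h1 : 1 + (N * (p : Matrix (Fin n) (Fin n) ℤ)
        + ∑ m ∈ Ico 2 (p + 1), N ^ m * (p.choose m : Matrix (Fin n) (Fin n) ℤ)) = 1 + 0 := by
      rw [add_zero, ← add_assoc]; exact expand.symm
    exact eq_neg_of_add_eq_zero_left (add_left_cancel h1)
  intro i j
  have hentry : (p : ℤ) * N i j
      = - ∑ m ∈ Ico 2 (p + 1), (p.choose m : ℤ) * (N ^ m) i j := by
    have := congrArg (fun M : Matrix (Fin n) (Fin n) ℤ => M i j) key
    simpa [← Matrix.diagonal_natCast, Matrix.mul_diagonal, Matrix.sum_apply,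
      Matrix.neg_apply, mul_comm] using this
  by_cases hpq : p = q
  · -- each term of the sum is divisible by q ^ (k + 2)
    subst hpq
    have hsum : (p : ℤ) ^ (k + 2) ∣ ∑ m ∈ Ico 2 (p + 1), (p.choose m : ℤ) * (N ^ m) i j := by
      refine Finset.dvd_sum fun m hm => ?_
      rw [Finset.mem_Ico] at hm
      obtain ⟨hm2, hmp⟩ := hm
      obtain ⟨t, rfl⟩ : ∃ t, m = t + 1 := ⟨m - 1, by omega⟩
      by_cases hmeq : t + 1 = p
      · -- m = p : q^(pk) divides the entry, and pk ≥ k+2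
        have h1 : ((p : ℤ)) ^ ((t + 1) * k) ∣ (N ^ (t + 1)) i j := by
          have := entry_dvd_pow ((p : ℤ) ^ k) N hd t i j
          rwa [← pow_mul, mul_comm k] at this
        refine Dvd.dvd.mul_left (dvd_trans (pow_dvd_pow _ ?_) h1) _
        have hk2 : p = 2 → 2 ≤ k := hcase rfl
        rcases Nat.lt_or_ge p 3 with h3 | h3
        · have h2k := hk2 (by omega)
          nlinarith
        · nlinarith
      · -- 2 ≤ m < p : p ∣ choose, and q^(mk) with 1 + mk ≥ k + 2
        have hc : (p : ℤ) ∣ (p.choose (t + 1) : ℤ) :=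
          Int.natCast_dvd_natCast.mpr (hp.dvd_choose_self (by omega) (by omega))
        have h1 : ((p : ℤ)) ^ ((t + 1) * k) ∣ (N ^ (t + 1)) i j := by
          have := entry_dvd_pow ((p : ℤ) ^ k) N hd t i j
          rwa [← pow_mul, mul_comm k] at this
        have : (p : ℤ) ^ (1 + (k + 1)) ∣ (p.choose (t + 1) : ℤ) * (N ^ (t + 1)) i j := by
          rw [pow_add, pow_one]
          exact mul_dvd_mul hc (dvd_trans (pow_dvd_pow _ (by nlinarith)) h1)
        simpa [show 1 + (k + 1) = k + 2 by omega] using this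
    -- q^(k+2) ∣ p * N i j = q * N i j, cancel one q
    have h2 : (p : ℤ) * (p : ℤ) ^ (k + 1) ∣ (p : ℤ) * N i j := by
      rw [hentry]
      exact dvd_neg.mpr (by rwa [show (p:ℤ) * (p:ℤ)^(k+1) = (p:ℤ)^(k+2) by ring])
    have hp0 : (p : ℤ) ≠ 0 := by exact_mod_cast hp.ne_zero
    exact (mul_dvd_mul_iff_left hp0).mp h2
  · -- p ≠ q : q^(k+1) divides the sum, and gcd(q^(k+1), p) = 1
    have hsum : (q : ℤ) ^ (k + 1) ∣ ∑ m ∈ Ico 2 (p + 1), (p.choose m : ℤ) * (N ^ m) i j := by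
      refine Finset.dvd_sum fun m hm => ?_
      rw [Finset.mem_Ico] at hm
      obtain ⟨hm2, _⟩ := hm
      obtain ⟨t, rfl⟩ : ∃ t, m = t + 1 := ⟨m - 1, by omega⟩
      have h1 : ((q : ℤ)) ^ ((t + 1) * k) ∣ (N ^ (t + 1)) i j := by
        have := entry_dvd_pow ((q : ℤ) ^ k) N hd t i j
        rwa [← pow_mul, mul_comm k] at this
      exact Dvd.dvd.mul_left (dvd_trans (pow_dvd_pow _ (by nlinarith)) h1) _
    have hco : IsCoprime ((q : ℤ) ^ (k + 1)) (p : ℤ) := by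
      have : Nat.Coprime (q ^ (k + 1)) p :=
        Nat.Coprime.pow_left _ (((Nat.coprime_primes hq hp).mpr (Ne.symm hpq)))
      exact_mod_cast this.isCoprime
    refine hco.dvd_of_dvd_mul_left ?_
    rw [hentry]
    exact dvd_neg.mpr hsum

private lemma pow_congruence {n : ℕ} (m : ℤ) (A : Matrix.SpecialLinearGroup (Fin n) ℤ)
    (hA : ∀ i j, m ∣ ((A : Matrix (Fin n) (Fin n) ℤ) - 1) i j) (t : ℕ) :
    ∀ i j, m ∣ (((A ^ t : Matrix.SpecialLinearGroup (Fin n) ℤ) : Matrix (Fin n) (Fin n) ℤ) - 1) i j := by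
  induction t with
  | zero => simp
  | succ t ih =>
    intro i j
    have hco : ((A ^ (t + 1) : Matrix.SpecialLinearGroup (Fin n) ℤ) : Matrix (Fin n) (Fin n) ℤ)
        = ((A ^ t : Matrix.SpecialLinearGroup (Fin n) ℤ) : Matrix (Fin n) (Fin n) ℤ)
          * (A : Matrix (Fin n) (Fin n) ℤ) := by
      rw [pow_succ, Matrix.SpecialLinearGroup.coe_mul]
    set X := ((A ^ t : Matrix.SpecialLinearGroup (Fin n) ℤ) : Matrix (Fin n) (Fin n) ℤ)
    set Y := (A : Matrix (Fin n) (Fin n) ℤ)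
    have hdec : X * Y - 1 = X * (Y - 1) + (X - 1) := by noncomm_ring
    rw [hco, hdec, Matrix.add_apply]
    refine dvd_add ?_ (ih i j)
    rw [Matrix.mul_apply]
    exact Finset.dvd_sum fun l _ => Dvd.dvd.mul_left (hA l j) _

private lemma int_eq_zero_of_dvd_pows (q : ℕ) (hq : 2 ≤ q) (a : ℤ)
    (h : ∀ t : ℕ, (q : ℤ) ^ t ∣ a) : a = 0 := by
  by_contra ha
  have h1 : ∀ t : ℕ, (q : ℤ) ^ t ≤ |a| := fun t =>
    Int.le_of_dvd (abs_pos.mpr ha) ((dvd_abs _ a).mpr (h t))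
  obtain ⟨t, ht⟩ := pow_unbounded_of_one_lt (|a|) (by exact_mod_cast hq : (1:ℤ) < q)
  exact absurd (h1 t) (not_le.mpr ht)

private lemma exists_good_prime (m : ℕ) (hm : 3 ≤ m) :
    ∃ q c : ℕ, q.Prime ∧ 1 ≤ c ∧ q ^ c ∣ m ∧ (q = 2 → 2 ≤ c) := by
  by_cases h4 : 4 ∣ m
  · exact ⟨2, 2, Nat.prime_two, by norm_num, by simpa using h4, fun _ => le_refl 2⟩
  rcases Nat.even_or_odd m with he | ho
  · obtain ⟨o, rfl⟩ : ∃ o, m = 2 * o := he.two_dvd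
    have hoodd : ¬ 2 ∣ o := fun ⟨s, hs⟩ => h4 ⟨s, by omega⟩
    have ho1 : o ≠ 1 := by omega
    have hq := Nat.minFac_prime ho1
    refine ⟨o.minFac, 1, hq, le_refl 1, ?_, ?_⟩
    · simpa using Dvd.dvd.mul_left o.minFac_dvd 2
    · intro h2; exact absurd (h2 ▸ o.minFac_dvd) hoodd
  · have hm1 : m ≠ 1 := by omega
    have hq := Nat.minFac_prime hm1
    refine ⟨m.minFac, 1, hq, le_refl 1, by simpa using m.minFac_dvd, ?_⟩
    intro h2
    exact absurd (h2 ▸ m.minFac_dvd) (by rw [Nat.odd_iff] at ho; omega)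


/-- For `m ≥ 3`, the principal congruence subgroup of `SL(n, ℤ)` of level `m`
(the kernel of reduction mod `m`) is torsion free: any element of finite order which is
congruent to the identity modulo `m` is the identity. -/
theorem SL_congruence_subgroup_torsion_free (n m : ℕ) (hm : 3 ≤ m)
    (A : Matrix.SpecialLinearGroup (Fin n) ℤ)
    (hA : ∀ i j, (m : ℤ) ∣ ((A : Matrix (Fin n) (Fin n) ℤ) - 1) i j)
    (hfin : IsOfFinOrder A) : A = 1 := by
  by_contra hA1
  have hopos : 0 < orderOf A := hfin.orderOf_pos
  have h1 : orderOf A ≠ 1 := fun h => hA1 (orderOf_eq_one_iff.mp h)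
  obtain ⟨p, hp, hpd⟩ := Nat.exists_prime_and_dvd h1
  set s := orderOf A / p with hs
  set B := A ^ s with hB
  have hBp : B ^ p = 1 := by rw [hB, ← pow_mul, Nat.div_mul_cancel hpd, pow_orderOf_eq_one]
  have hBne : B ≠ 1 := by
    intro h
    have hd2 : orderOf A ∣ s := orderOf_dvd_of_pow_eq_one (hB ▸ h)
    have hslt : s < orderOf A := Nat.div_lt_self hopos hp.one_lt
    have hspos : 0 < s := Nat.div_pos (Nat.le_of_dvd hopos hpd) hp.pos
    have := Nat.le_of_dvd hspos hd2
    omega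
  obtain ⟨q, c, hq, hc1, hqc, hq2⟩ := exists_good_prime m hm
  set N : Matrix (Fin n) (Fin n) ℤ := ((B : Matrix (Fin n) (Fin n) ℤ) - 1) with hNdef
  have hmq : (q : ℤ) ^ c ∣ (m : ℤ) := by exact_mod_cast Int.natCast_dvd_natCast.mpr hqc
  have hNcong : ∀ i j, (q : ℤ) ^ c ∣ N i j := fun i j =>
    dvd_trans hmq (pow_congruence (m : ℤ) A hA s i j)
  have hN1 : (N + 1) ^ p = 1 := by
    have h2 : ((B ^ p : Matrix.SpecialLinearGroup (Fin n) ℤ) : Matrix (Fin n) (Fin n) ℤ)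
        = ((1 : Matrix.SpecialLinearGroup (Fin n) ℤ) : Matrix (Fin n) (Fin n) ℤ) := by rw [hBp]
    rw [Matrix.SpecialLinearGroup.coe_pow, Matrix.SpecialLinearGroup.coe_one] at h2
    simpa [hNdef, sub_add_cancel] using h2
  have hall : ∀ t i j, (q : ℤ) ^ (c + t) ∣ N i j := by
    intro t
    induction t with
    | zero => simpa using hNcong
    | succ t ih =>
      have hstep := minkowski_step p q hp hq (c + t) (by omega)
        (fun _ h2 => by have := hq2 h2; omega) N hN1 ih
      intro i j
      have := hstep i j
      rwa [show c + (t + 1) = c + t + 1 by ring]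
  have hNzero : N = 0 := by
    ext i j
    rw [Matrix.zero_apply]
    refine int_eq_zero_of_dvd_pows q hq.two_le _ fun t => ?_
    exact dvd_trans (pow_dvd_pow _ (by omega : t ≤ c + t)) (hall t i j)
  have hBone : (B : Matrix (Fin n) (Fin n) ℤ) = 1 := by
    have := sub_eq_zero.mp hNzero
    simpa using this
  exact hBne (Subtype.coe_injective hBone)
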